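/- Under the stated setup, assume in addition that A = ⊕_{w ∈ ℤ} A_w is a ℤ-graded k-algebra with A_w = 0 for w > 0, and that there is a positive integer w_1 with ρ(ξ)(A_w) ⊆ A_{w + w_1} for all ξ ∈ 𝔲 and all w ∈ ℤ. Let 𝔲' ⊆ 𝔲 be a subspace with quotient map q : 𝔲 → 𝔰 := 𝔲/𝔲', set r := dim 𝔲 and k := dim 𝔰, and fix a basis ξ_1,…,ξ_r of 𝔲 with ξ_1,…,ξ_{r−k} a basis of 𝔲'. Suppose that the composition of q* ⊗ id : 𝔰* ⊗_k A → 𝔲* ⊗_k A with the projection 𝔲* ⊗_k A → coker(φ) is an isomorphism. Then there exist elements f_1,…,f_{r−k} ∈ A_{−w_1} such that ρ(ξ_i)(f_j) = δ_{ij} for all 1 ≤ i,j ≤ r−k. -/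

import Mathlib

noncomputable section

variable {k A 𝔲 : Type*}
variable [Field k] [CommRing A] [Algebra k A]
variable [AddCommGroup 𝔲] [Module k 𝔲]
open DirectSum

lemma proj0_sum (𝒜 : ℤ → Submodule k A) [GradedAlgebra 𝒜] {ι : Type*} (s : Finset ι)
    (f : ι → A) :
    (DirectSum.decompose 𝒜 (∑ i ∈ s, f i) 0 : A)
      = ∑ i ∈ s, (DirectSum.decompose 𝒜 (f i) 0 : A) := by
  rw [DirectSum.decompose_sum, DFinsupp.finset_sum_apply]
  push_cast
  rfl

lemma key_deg (ρ : 𝔲 →ₗ[k] Derivation k A A) (𝒜 : ℤ → Submodule k A) [GradedAlgebra 𝒜]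
    (hneg : ∀ w : ℤ, 0 < w → 𝒜 w = ⊥)
    (w₁ : ℤ) (hw₁ : 0 < w₁)
    (hder : ∀ (ξ : 𝔲) (w : ℤ) (a : A), a ∈ 𝒜 w → ρ ξ a ∈ 𝒜 (w + w₁))
    (ξ : 𝔲) (a c : A) :
    (DirectSum.decompose 𝒜 (a * ρ ξ c) 0 : A)
      = ρ ξ ((DirectSum.decompose 𝒜 a 0 : A) * (DirectSum.decompose 𝒜 c (-w₁) : A)) := by
  induction a using DirectSum.Decomposition.inductionOn 𝒜 with
  | zero => simp
  | add a a' ha ha' =>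
      rw [add_mul]
      simp only [DirectSum.decompose_add, DirectSum.add_apply, Submodule.coe_add]
      rw [add_mul, map_add, ha, ha']
  | homogeneous a =>
      rename_i u
      induction c using DirectSum.Decomposition.inductionOn 𝒜 with
      | zero => simp
      | add c c' hc hc' =>
          rw [map_add, mul_add]
          simp only [DirectSum.decompose_add, DirectSum.add_apply, Submodule.coe_add]
          rw [mul_add, map_add, hc, hc']
      | homogeneous c =>
          rename_i v
          by_cases hu : u = 0
          · subst hu
            rw [DirectSum.decompose_of_mem_same 𝒜 a.2]
            by_cases hv : v = -w₁
            · subst hv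
              rw [DirectSum.decompose_of_mem_same 𝒜 c.2]
              have h0 : ρ ξ (a : A) = 0 := by
                have := hder ξ 0 a a.2
                rw [zero_add, hneg w₁ hw₁] at this
                simpa using this
              rw [Derivation.leibniz]
              have : (DirectSum.decompose 𝒜 ((a : A) * ρ ξ (c : A)) 0 : A)
                  = (a : A) * ρ ξ (c : A) := by
                refine DirectSum.decompose_of_mem_same 𝒜 ?_
                have := SetLike.mul_mem_graded a.2 (hder ξ (-w₁) c c.2)
                simpa using this
              rw [this, h0]
              simp [smul_eq_mul, mul_comm]
            · rw [DirectSum.decompose_of_mem_ne 𝒜 c.2 hv]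
              rw [DirectSum.decompose_of_mem_ne 𝒜
                (SetLike.mul_mem_graded a.2 (hder ξ v c c.2)) (by omega)]
              simp
          · rw [DirectSum.decompose_of_mem_ne 𝒜 a.2 hu]
            rw [zero_mul, map_zero]
            by_cases hsum : (0 : ℤ) = u + (v + w₁)
            · -- then u ≠ 0; if u > 0, a = 0; if u < 0, v + w₁ > 0 and ρ ξ c = 0
              rcases lt_or_gt_of_ne (fun h => hu h.symm) with h | h
              · -- 0 < u : a ∈ 𝒜 u = ⊥
                have : (a : A) = 0 := by
                  have : (a : A) ∈ (⊥ : Submodule k A) := by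
                    rw [← hneg u h]; exact a.2
                  simpa using this
                rw [this, zero_mul]; simp
              · have : ρ ξ (c : A) = 0 := by
                  have h2 := hder ξ v c c.2
                  rw [hneg (v + w₁) (by omega)] at h2
                  simpa using h2
                rw [this, mul_zero]; simp
            · rw [DirectSum.decompose_of_mem_ne 𝒜
                (SetLike.mul_mem_graded a.2 (hder ξ v c c.2)) (fun h => hsum h.symm)]
/-- The derivation `A → 𝔲* ⊗ₖ A` (with `𝔲* ⊗ₖ A` represented by `𝔲 →ₗ[k] A`)
sending `b` to `ξ ↦ ρ(ξ)(b)`. -/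
def coactDer (ρ : 𝔲 →ₗ[k] Derivation k A A) : Derivation k A (𝔲 →ₗ[k] A) where
  toLinearMap :=
    { toFun := fun b =>
        { toFun := fun ξ => ρ ξ b
          map_add' := fun ξ η => by simp
          map_smul' := fun c ξ => by simp }
      map_add' := fun b c => by ext ξ; simp
      map_smul' := fun c b => by ext ξ; simp }
  map_one_eq_zero' := by ext ξ; simp
  leibniz' := fun a b => by
    ext ξ
    simp [Derivation.leibniz, smul_eq_mul, mul_comm]

/-- The infinitesimal action `φ : Ω_{A/k} → 𝔲* ⊗ₖ A`, determined by
`φ(a db) = (ξ ↦ a · ρ(ξ)(b))`. -/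
def phiDer (ρ : 𝔲 →ₗ[k] Derivation k A A) :
    KaehlerDifferential k A →ₗ[A] (𝔲 →ₗ[k] A) :=
  (coactDer ρ).liftKaehlerDifferential

/-- Precomposition with the quotient map, `(𝔲/𝔲')* ⊗ₖ A → 𝔲* ⊗ₖ A`. -/
def precompQ (𝔲' : Submodule k 𝔲) : ((𝔲 ⧸ 𝔲') →ₗ[k] A) →ₗ[A] (𝔲 →ₗ[k] A) where
  toFun f := f.comp 𝔲'.mkQ
  map_add' f g := by ext v; simp
  map_smul' a f := by ext v; simp

/-- The invariants `A^𝔲 = {a ∈ A : ρ(ξ)(a) = 0 for all ξ ∈ 𝔲}`, as a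
`k`-subalgebra of `A`. -/
def invariants (ρ : 𝔲 →ₗ[k] Derivation k A A) : Subalgebra k A where
  carrier := {a | ∀ ξ : 𝔲, ρ ξ a = 0}
  mul_mem' := fun {a b} ha hb ξ => by
    rw [Derivation.leibniz]
    simp [ha ξ, hb ξ]
  one_mem' := fun ξ => by simp
  add_mem' := fun {a b} ha hb ξ => by simp [ha ξ, hb ξ]
  zero_mem' := fun ξ => by simp
  algebraMap_mem' := fun c ξ => by simp

/-- Assume moreover that `A` is ℤ-graded with `A_w = 0` for
`w > 0` and that there is a positive integer `w₁` with `ρ(ξ)(A_w) ⊆ A_{w+w₁}`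
for all `ξ ∈ 𝔲`.  Let `𝔲' ⊆ 𝔲` with quotient `𝔰 = 𝔲/𝔲'`, fix a basis
`ξ_1, …, ξ_r` of `𝔲` whose first `r - k` vectors form a basis of `𝔲'`
(`m = r - k` below), and assume the composition of `q* ⊗ id` with the projection
onto `coker φ` is an isomorphism.  Then there exist `f_1, …, f_{r-k} ∈ A_{-w₁}`
with `ρ(ξ_i)(f_j) = δ_ij`. -/
theorem statement8 [FiniteDimensional k 𝔲] (ρ : 𝔲 →ₗ[k] Derivation k A A)
    (𝒜 : ℤ → Submodule k A) [GradedAlgebra 𝒜]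
    (hneg : ∀ w : ℤ, 0 < w → 𝒜 w = ⊥)
    (w₁ : ℤ) (hw₁ : 0 < w₁)
    (hder : ∀ (ξ : 𝔲) (w : ℤ) (a : A), a ∈ 𝒜 w → ρ ξ a ∈ 𝒜 (w + w₁))
    (𝔲' : Submodule k 𝔲)
    (r m : ℕ) (hm : m ≤ r) (b : Module.Basis (Fin r) k 𝔲)
    (hb : 𝔲' = Submodule.span k (Set.range fun i : Fin m => b (Fin.castLE hm i)))
    (hiso : Function.Bijective
      ⇑((LinearMap.range (phiDer ρ)).mkQ ∘ₗ precompQ (A := A) 𝔲')) :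
    ∃ f : Fin m → A, (∀ j, f j ∈ 𝒜 (-w₁)) ∧
      ∀ i j : Fin m, ρ (b (Fin.castLE hm i)) (f j) = if i = j then 1 else 0 := by
  classical
  have hrange : LinearMap.range (phiDer ρ)
      = Submodule.span A (Set.range ⇑(coactDer ρ)) := by
    rw [LinearMap.range_eq_map, ← KaehlerDifferential.span_range_derivation,
      Submodule.map_span, ← Set.range_comp]
    congr 1
    apply congrArg
    funext x
    exact Derivation.liftKaehlerDifferential_comp_D (coactDer ρ) x
  have main : ∀ j : Fin m, ∃ fj ∈ 𝒜 (-w₁),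
      ∀ i : Fin m, ρ (b (Fin.castLE hm i)) fj = if i = j then 1 else 0 := by
    intro j
    set ε : 𝔲 →ₗ[k] A := (Algebra.linearMap k A).comp (b.coord (Fin.castLE hm j)) with hε
    obtain ⟨g, hg⟩ := hiso.2 ((LinearMap.range (phiDer ρ)).mkQ ε)
    have hmem : ε - precompQ 𝔲' g ∈ LinearMap.range (phiDer ρ) := by
      have : (LinearMap.range (phiDer ρ)).mkQ (ε - precompQ 𝔲' g) = 0 := by
        rw [map_sub]
        simp only [LinearMap.comp_apply] at hg
        rw [hg, sub_self]
      rwa [← LinearMap.mem_ker, Submodule.ker_mkQ] at this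
    rw [hrange, Submodule.mem_span_set'] at hmem
    obtain ⟨n, av, cv, hsum⟩ := hmem
    choose c hc using fun t => (cv t).2
    simp only [← hc] at hsum
    -- hsum : ∑ t, av t • coactDer ρ (c t) = ε - precompQ 𝔲' g
    have heval : ∀ i : Fin m,
        ∑ t, av t * ρ (b (Fin.castLE hm i)) (c t) = (if i = j then 1 else 0 : A) := by
      intro i
      have h1 := congrArg (fun F : 𝔲 →ₗ[k] A => F (b (Fin.castLE hm i))) hsum
      simp only [LinearMap.sum_apply, LinearMap.smul_apply, smul_eq_mul,
        LinearMap.sub_apply] at h1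
      have hξ : b (Fin.castLE hm i) ∈ 𝔲' := by
        rw [hb]
        exact Submodule.subset_span ⟨i, rfl⟩
      have h2 : (precompQ (A := A) 𝔲' g) (b (Fin.castLE hm i)) = 0 := by
        show g (Submodule.Quotient.mk (b (Fin.castLE hm i))) = 0
        rw [(Submodule.Quotient.mk_eq_zero 𝔲').mpr hξ, map_zero]
      have h3 : ε (b (Fin.castLE hm i)) = (if i = j then 1 else 0 : A) := by
        rw [hε]
        simp only [LinearMap.comp_apply, Module.Basis.coord_apply, Module.Basis.repr_self,
          Algebra.linearMap_apply]
        rw [Finsupp.single_apply]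
        simp [Fin.castLE_inj, apply_ite (algebraMap k A)]
      have h4 : ∀ t : Fin n, (av t • coactDer ρ (c t)) (b (Fin.castLE hm i))
          = av t * ρ (b (Fin.castLE hm i)) (c t) := fun t => rfl
      calc ∑ t, av t * ρ (b (Fin.castLE hm i)) (c t)
          = ∑ t, (av t • coactDer ρ (c t)) (b (Fin.castLE hm i)) := by
            simp only [h4]
        _ = (if i = j then 1 else 0 : A) := by rw [← LinearMap.sum_apply, hsum]; simp [h2, h3]
    refine ⟨∑ t, (DirectSum.decompose 𝒜 (av t) 0 : A)
        * (DirectSum.decompose 𝒜 (c t) (-w₁) : A), ?_, ?_⟩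
    · refine Submodule.sum_mem _ fun t _ => ?_
      have := SetLike.mul_mem_graded (SetLike.coe_mem (DirectSum.decompose 𝒜 (av t) 0))
        (SetLike.coe_mem (DirectSum.decompose 𝒜 (c t) (-w₁)))
      simpa using this
    · intro i
      have h5 := congrArg (fun x => (DirectSum.decompose 𝒜 x 0 : A)) (heval i)
      simp only at h5
      rw [proj0_sum] at h5
      have h6 : ∀ t : Fin n, (DirectSum.decompose 𝒜
            (av t * ρ (b (Fin.castLE hm i)) (c t)) 0 : A)
          = ρ (b (Fin.castLE hm i)) ((DirectSum.decompose 𝒜 (av t) 0 : A)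
            * (DirectSum.decompose 𝒜 (c t) (-w₁) : A)) :=
        fun t => key_deg ρ 𝒜 hneg w₁ hw₁ hder _ _ _
      rw [Finset.sum_congr rfl (fun t _ => h6 t)] at h5
      rw [map_sum]
      rw [h5]
      by_cases hij : i = j
      · simp only [hij, if_pos rfl]
        exact DirectSum.decompose_of_mem_same 𝒜 SetLike.GradedOne.one_mem
      · simp [hij]
  choose f hf1 hf2 using main
  exact ⟨f, hf1, fun i j => hf2 j i⟩
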